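/- Let X ∈ C^{n1×...×nd}, L an r-dimensional subspace of C^{n1×...×nd} with orthonormal basis {T_k}, P the orthogonal projection onto the orthogonal complement of L, and ε ∈ (0,1). Suppose a linear map L₀ is an (ε/6)-JL embedding of L ∪ {P(X)} and an (ε/(24√r))-JL embedding of the 4r tensors {P(X)/‖P(X)‖ ± T_k, P(X)/‖P(X)‖ ± i T_k : k ∈ [r]} (assume P(X) ≠ 0). Then |‖L₀(X - Y)‖² - ‖X - Y‖²| ≤ (ε/3)‖X - Y‖² holds for all Y ∈ L. -/

import Mathlib

open scoped BigOperators

/-- Squared Euclidean (Frobenius) norm of a tensor. -/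
noncomputable def tnsq {ι : Type*} [Fintype ι] (X : ι → ℂ) : ℝ := ∑ i, ‖X i‖ ^ 2

/-- Tensor inner product `⟨X, Y⟩ = Σ X_i conj(Y_i)`. -/
noncomputable def ttip {ι : Type*} [Fintype ι] (X Y : ι → ℂ) : ℂ :=
  ∑ i, X i * (starRingEnd ℂ) (Y i)

/-- A linear map `L₀` between tensor spaces is an `ε`-JL embedding of a set `S`. -/
def IsJLmap {ι κ : Type*} [Fintype ι] [Fintype κ] (ε : ℝ)
    (L₀ : (ι → ℂ) →ₗ[ℂ] (κ → ℂ)) (S : Set (ι → ℂ)) : Prop :=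
  ∀ X ∈ S, ∃ e ∈ Set.Ioo (-ε) ε, tnsq (L₀ X) = (1 + e) * tnsq X

/-- The orthogonal projection of `X` onto the orthogonal complement of the span of the
orthonormal family `T`, namely `P_{L^⊥}(X) = X - Σ_k ⟨X, T_k⟩ T_k`. -/
noncomputable def projPerp {ι : Type*} [Fintype ι] {r : ℕ}
    (T : Fin r → ι → ℂ) (X : ι → ℂ) : ι → ℂ :=
  X - ∑ k, ttip X (T k) • T k

set_option maxHeartbeats 1000000

namespace CLSAux
variable {ι : Type*} [Fintype ι]

open Complex

lemma ttip_add_left (X Y Z : ι → ℂ) : ttip (X + Y) Z = ttip X Z + ttip Y Z := by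
  simp [ttip, add_mul, Finset.sum_add_distrib]

lemma ttip_sub_left (X Y Z : ι → ℂ) : ttip (X - Y) Z = ttip X Z - ttip Y Z := by
  simp [ttip, sub_mul, Finset.sum_sub_distrib]

lemma ttip_smul_left (c : ℂ) (X Z : ι → ℂ) : ttip (c • X) Z = c * ttip X Z := by
  simp [ttip, Finset.mul_sum, mul_assoc]

lemma ttip_conj (X Y : ι → ℂ) : ttip Y X = (starRingEnd ℂ) (ttip X Y) := by
  simp [ttip, map_sum, mul_comm]

lemma ttip_smul_right (c : ℂ) (X Y : ι → ℂ) :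
    ttip X (c • Y) = (starRingEnd ℂ) c * ttip X Y := by
  simp [ttip, Finset.mul_sum]; ring_nf
  exact Finset.sum_congr rfl fun i _ => by ring

lemma ttip_sum_left {α : Type*} (s : Finset α) (f : α → ι → ℂ) (Z : ι → ℂ) :
    ttip (∑ k ∈ s, f k) Z = ∑ k ∈ s, ttip (f k) Z := by
  simp only [ttip, Finset.sum_apply, Finset.sum_mul]
  rw [Finset.sum_comm]

lemma ttip_sum_right {α : Type*} (s : Finset α) (f : α → ι → ℂ) (Z : ι → ℂ) :
    ttip Z (∑ k ∈ s, f k) = ∑ k ∈ s, ttip Z (f k) := by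
  rw [ttip_conj, ttip_sum_left, map_sum]
  exact Finset.sum_congr rfl fun k _ => (ttip_conj (f k) Z).symm

lemma ttip_self (X : ι → ℂ) : ttip X X = (tnsq X : ℂ) := by
  simp only [ttip, tnsq, Complex.mul_conj]
  push_cast
  exact Finset.sum_congr rfl fun i _ => by
    rw [Complex.normSq_eq_norm_sq]; push_cast; ring

lemma tnsq_nonneg (X : ι → ℂ) : 0 ≤ tnsq X :=
  Finset.sum_nonneg fun i _ => sq_nonneg _

lemma tnsq_pos {X : ι → ℂ} (h : X ≠ 0) : 0 < tnsq X := by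
  rcases (tnsq_nonneg X).lt_or_eq with h' | h'
  · exact h'
  · exfalso; apply h; funext i
    have := (Finset.sum_eq_zero_iff_of_nonneg (fun i _ => sq_nonneg ‖X i‖)).1 h'.symm i
      (Finset.mem_univ i)
    simpa using pow_eq_zero_iff (n := 2) two_ne_zero |>.1 this

lemma tnsq_add (X Y : ι → ℂ) : tnsq (X + Y) = tnsq X + tnsq Y + 2 * (ttip X Y).re := by
  have h : ttip (X + Y) (X + Y) = ttip X X + ttip Y Y + (ttip X Y + ttip Y X) := by
    rw [ttip_add_left]
    rw [ttip_conj (X+Y) X, ttip_conj (X+Y) Y, ttip_add_left, ttip_add_left]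
    simp [map_add, ← ttip_conj]
    ring
  have h2 : (tnsq (X + Y) : ℂ).re = (ttip X X + ttip Y Y + (ttip X Y + ttip Y X)).re := by
    rw [← h, ttip_self]
  have := h2
  simp only [ttip_self, ttip_conj X Y, Complex.add_re, Complex.conj_re, Complex.ofReal_re] at this
  linarith

lemma tnsq_smul (c : ℂ) (X : ι → ℂ) : tnsq (c • X) = ‖c‖ ^ 2 * tnsq X := by
  have h : ttip (c • X) (c • X) = ((Complex.normSq c : ℂ)) * ttip X X := by
    rw [ttip_smul_left, ttip_smul_right, ← mul_assoc, Complex.mul_conj]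
  have h2 := congrArg Complex.re h
  rw [ttip_self, ttip_self, ← Complex.ofReal_mul] at h2
  simpa [Complex.sq_norm] using h2

lemma tnsq_sub (X Y : ι → ℂ) : tnsq (X - Y) = tnsq X + tnsq Y - 2 * (ttip X Y).re := by
  have hadd := tnsq_add X (-Y)
  have hn : ttip X (-Y) = - ttip X Y := by
    have h : (-Y : ι → ℂ) = (-1 : ℂ) • Y := by funext i; simp
    rw [h, ttip_smul_right]; simp
  have hnY : tnsq (-Y : ι → ℂ) = tnsq Y := by
    have h : (-Y : ι → ℂ) = (-1 : ℂ) • Y := by funext i; simp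
    rw [h, tnsq_smul]; simp
  rw [hn, hnY] at hadd
  rw [sub_eq_add_neg, hadd]
  simp only [Complex.neg_re]
  ring


lemma tnsq_polar (A B : ι → ℂ) :
    tnsq (A + B) - tnsq (A - B) = 4 * (ttip A B).re := by
  rw [tnsq_add, tnsq_sub]; ring

end CLSAux

open CLSAux in
/-- Embeddings for compressed least squares:  if `L₀` is an `(ε/6)`-JL embedding of
`L ∪ {P_{L^⊥}(X)}` and an `(ε/(24√r))`-JL embedding of the `4r` tensors
`{P_{L^⊥}(X)/‖P_{L^⊥}(X)‖ ± T_k, P_{L^⊥}(X)/‖P_{L^⊥}(X)‖ ± i T_k}`, where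
`L = span{T_1,…,T_r}` with the `T_k` orthonormal and `P_{L^⊥}(X) ≠ 0`, then
`|‖L₀(X - Y)‖² - ‖X - Y‖²| ≤ (ε/3)‖X - Y‖²` for all `Y ∈ L`. -/
theorem compressed_least_squares_embedding {d d' r : ℕ} {n : Fin d → ℕ}
    {md : Fin d' → ℕ} {ε : ℝ} (hε : ε ∈ Set.Ioo (0 : ℝ) 1)
    (X : ((i : Fin d) → Fin (n i)) → ℂ)
    (T : Fin r → ((i : Fin d) → Fin (n i)) → ℂ)
    (hT : ∀ k h, ttip (T k) (T h) = if k = h then 1 else 0)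
    (L₀ : (((i : Fin d) → Fin (n i)) → ℂ) →ₗ[ℂ] (((i : Fin d') → Fin (md i)) → ℂ))
    (hW : projPerp T X ≠ 0)
    (hJL1 : IsJLmap (ε / 6) L₀
      ((Submodule.span ℂ (Set.range T) : Set _) ∪ {projPerp T X}))
    (hJL2 : IsJLmap (ε / (24 * Real.sqrt r)) L₀
      {Z | ∃ k : Fin r,
        Z = (Real.sqrt (tnsq (projPerp T X)) : ℂ)⁻¹ • projPerp T X - T k ∨
        Z = (Real.sqrt (tnsq (projPerp T X)) : ℂ)⁻¹ • projPerp T X + T k ∨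
        Z = (Real.sqrt (tnsq (projPerp T X)) : ℂ)⁻¹ • projPerp T X - Complex.I • T k ∨
        Z = (Real.sqrt (tnsq (projPerp T X)) : ℂ)⁻¹ • projPerp T X + Complex.I • T k}) :
    ∀ Y ∈ Submodule.span ℂ (Set.range T),
      |tnsq (L₀ (X - Y)) - tnsq (X - Y)| ≤ (ε / 3) * tnsq (X - Y) := by
  obtain ⟨hε0, hε1⟩ := hε
  intro Y hY
  set W := projPerp T X with hWdef
  have hWpos : 0 < tnsq W := tnsq_pos hW
  set c := Real.sqrt (tnsq W) with hcdef
  have hc0 : 0 < c := Real.sqrt_pos.2 hWpos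
  have hc2 : c ^ 2 = tnsq W := Real.sq_sqrt hWpos.le
  set u := ((c : ℂ))⁻¹ • W with hudef
  clear_value W c u
  have hWu : W = (c : ℂ) • u := by
    rw [hudef, smul_smul, mul_inv_cancel₀ (by exact_mod_cast hc0.ne'), one_smul]
  have hWT : ∀ k, ttip W (T k) = 0 := by
    intro k
    rw [hWdef]
    simp only [projPerp]
    rw [ttip_sub_left, ttip_sum_left]
    simp only [ttip_smul_left, hT, mul_ite, mul_one, mul_zero]
    rw [Finset.sum_ite_eq' Finset.univ k (fun j => ttip X (T j))]
    simp
  have hrep : ∀ Z ∈ Submodule.span ℂ (Set.range T), Z = ∑ k, ttip Z (T k) • T k := by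
    intro Z hZ
    induction hZ using Submodule.span_induction with
    | mem x hx =>
      obtain ⟨j, rfl⟩ := hx
      simp only [hT, ite_smul, one_smul, zero_smul]
      rw [Finset.sum_ite_eq Finset.univ j T]
      simp
    | zero => simp [ttip]
    | add x y hx hy ihx ihy =>
      simp only [ttip_add_left, add_smul, Finset.sum_add_distrib]
      rw [← ihx, ← ihy]
    | smul a x hx ih =>
      simp only [ttip_smul_left, mul_smul, ← Finset.smul_sum]
      rw [← ih]
  have hXWspan : X - W ∈ Submodule.span ℂ (Set.range T) := by
    have h : X - W = ∑ k, ttip X (T k) • T k := by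
      rw [hWdef]; simp only [projPerp]; abel
    rw [h]
    exact Submodule.sum_mem _ fun k _ =>
      Submodule.smul_mem _ _ (Submodule.subset_span ⟨k, rfl⟩)
  set V := X - W - Y with hVdef
  have hVspan : V ∈ Submodule.span ℂ (Set.range T) := Submodule.sub_mem _ hXWspan hY
  set b : Fin r → ℂ := fun k => ttip V (T k) with hbdef
  clear_value V b
  have hVsum : V = ∑ k, b k • T k := by rw [hbdef]; exact hrep V hVspan
  have hsplit : X - Y = W + V := by rw [hVdef]; abel
  have hWV : ttip W V = 0 := by
    rw [hVsum, ttip_sum_right]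
    simp [ttip_smul_right, hWT]
  have hS : tnsq (X - Y) = tnsq W + tnsq V := by
    rw [hsplit, tnsq_add, hWV]; simp
  have htV : tnsq V = ∑ k, ‖b k‖ ^ 2 := by
    have h : ttip V V = ∑ j, (Complex.normSq (b j) : ℂ) := by
      conv_lhs => rw [hVsum, ttip_sum_left]
      refine Finset.sum_congr rfl fun j _ => ?_
      rw [ttip_smul_left, ttip_sum_right]
      simp only [ttip_smul_right, hT, mul_ite, mul_one, mul_zero]
      rw [Finset.sum_ite_eq Finset.univ j (fun k => (starRingEnd ℂ) (b k))]
      simp [Complex.mul_conj]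
    have h2 := congrArg Complex.re h
    rw [ttip_self] at h2
    simp only [Complex.ofReal_re] at h2
    rw [h2]
    rw [Complex.re_sum]
    refine Finset.sum_congr rfl fun j _ => ?_
    rw [Complex.ofReal_re, Complex.normSq_eq_norm_sq]
  have hnc : ‖(c : ℂ)‖ = c := by
    rw [Complex.norm_real]
    exact abs_of_pos hc0
  have htu : tnsq u = 1 := by
    rw [hudef, tnsq_smul, norm_inv, hnc, ← hc2]
    field_simp
  have htT : ∀ k, tnsq (T k) = 1 := by
    intro k
    have h1 := hT k k
    rw [if_pos rfl, ttip_self] at h1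
    exact_mod_cast h1
  have huT : ∀ k, ttip u (T k) = 0 := by
    intro k
    rw [hudef, ttip_smul_left, hWT, mul_zero]
  have hz : ∀ k, ‖ttip (L₀ u) (L₀ (T k))‖ ≤ 2 * (ε / (24 * Real.sqrt r)) := by
    intro k
    obtain ⟨em, hem, h1⟩ := hJL2 (u - T k) ⟨k, Or.inl rfl⟩
    obtain ⟨ep, hep, h2⟩ := hJL2 (u + T k) ⟨k, Or.inr (Or.inl rfl)⟩
    obtain ⟨fm, hfm, h3⟩ := hJL2 (u - Complex.I • T k) ⟨k, Or.inr (Or.inr (Or.inl rfl))⟩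
    obtain ⟨fp, hfp, h4⟩ := hJL2 (u + Complex.I • T k) ⟨k, Or.inr (Or.inr (Or.inr rfl))⟩
    have e1 : tnsq (u + T k) = 2 := by
      rw [tnsq_add, htu, htT, huT]; norm_num
    have e2 : tnsq (u - T k) = 2 := by
      rw [tnsq_sub, htu, htT, huT]; norm_num
    have hiT : tnsq (Complex.I • T k) = 1 := by
      rw [tnsq_smul, htT]; simp
    have huiT : ttip u (Complex.I • T k) = 0 := by
      rw [ttip_smul_right, huT, mul_zero]
    have e3 : tnsq (u + Complex.I • T k) = 2 := by
      rw [tnsq_add, htu, hiT, huiT]; norm_num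
    have e4 : tnsq (u - Complex.I • T k) = 2 := by
      rw [tnsq_sub, htu, hiT, huiT]; norm_num
    have hre : 4 * (ttip (L₀ u) (L₀ (T k))).re = 2 * ep - 2 * em := by
      have hp := tnsq_polar (L₀ u) (L₀ (T k))
      rw [← map_add, ← map_sub, h2, h1, e1, e2] at hp
      linarith
    have him : 4 * (ttip (L₀ u) (L₀ (T k))).im = 2 * fp - 2 * fm := by
      have hp := tnsq_polar (L₀ u) (L₀ (Complex.I • T k))
      rw [← map_add, ← map_sub, h4, h3, e3, e4] at hp
      have hsm : ttip (L₀ u) (L₀ (Complex.I • T k))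
          = (starRingEnd ℂ) Complex.I * ttip (L₀ u) (L₀ (T k)) := by
        rw [show L₀ (Complex.I • T k) = Complex.I • L₀ (T k) from map_smul L₀ _ _,
          ttip_smul_right]
      rw [hsm] at hp
      have hre' : ((starRingEnd ℂ) Complex.I * ttip (L₀ u) (L₀ (T k))).re
          = (ttip (L₀ u) (L₀ (T k))).im := by
        simp [Complex.mul_re]
      rw [hre'] at hp
      linarith
    have hbre : |(ttip (L₀ u) (L₀ (T k))).re| ≤ ε / (24 * Real.sqrt r) := by
      rw [abs_le]
      constructor <;> [linarith [hep.1, hem.2]; linarith [hep.2, hem.1]]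
    have hbim : |(ttip (L₀ u) (L₀ (T k))).im| ≤ ε / (24 * Real.sqrt r) := by
      rw [abs_le]
      constructor <;> [linarith [hfp.1, hfm.2]; linarith [hfp.2, hfm.1]]
    calc ‖ttip (L₀ u) (L₀ (T k))‖
        ≤ |(ttip (L₀ u) (L₀ (T k))).re| + |(ttip (L₀ u) (L₀ (T k))).im| :=
          Complex.norm_le_abs_re_add_abs_im _
      _ ≤ 2 * (ε / (24 * Real.sqrt r)) := by linarith
  have hε' : 0 ≤ ε / (24 * Real.sqrt r) := by positivity
  have htVnn : 0 ≤ tnsq V := tnsq_nonneg V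
  have hsV : Real.sqrt (tnsq V) ^ 2 = tnsq V := Real.sq_sqrt htVnn
  have hcross : ‖ttip (L₀ W) (L₀ V)‖ ≤ ε / 12 * (c * Real.sqrt (tnsq V)) := by
    have hW' : ttip (L₀ W) (L₀ V) = (c : ℂ) * ttip (L₀ u) (L₀ V) := by
      rw [show L₀ W = (c : ℂ) • L₀ u from by rw [← map_smul, ← hWu], ttip_smul_left]
    have hV' : ttip (L₀ u) (L₀ V) = ∑ k, (starRingEnd ℂ) (b k) * ttip (L₀ u) (L₀ (T k)) := by
      conv_lhs => rw [hVsum]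
      rw [map_sum, ttip_sum_right]
      refine Finset.sum_congr rfl fun k _ => ?_
      rw [show L₀ (b k • T k) = b k • L₀ (T k) from map_smul L₀ _ _, ttip_smul_right]
    have habs : ‖ttip (L₀ u) (L₀ V)‖
        ≤ (∑ k, ‖b k‖) * (2 * (ε / (24 * Real.sqrt r))) := by
      rw [hV']
      calc ‖∑ k, (starRingEnd ℂ) (b k) * ttip (L₀ u) (L₀ (T k))‖
          ≤ ∑ k, ‖(starRingEnd ℂ) (b k) * ttip (L₀ u) (L₀ (T k))‖ := by
            simpa using
              norm_sum_le Finset.univ (fun k => (starRingEnd ℂ) (b k) * ttip (L₀ u) (L₀ (T k)))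
        _ ≤ ∑ k, ‖b k‖ * (2 * (ε / (24 * Real.sqrt r))) := by
            refine Finset.sum_le_sum fun k _ => ?_
            rw [norm_mul]
            have hbk : ‖(starRingEnd ℂ) (b k)‖ = ‖b k‖ := by
              rw [Complex.norm_conj]
            rw [hbk]
            exact mul_le_mul_of_nonneg_left (hz k) (norm_nonneg _)
        _ = (∑ k, ‖b k‖) * (2 * (ε / (24 * Real.sqrt r))) := by rw [Finset.sum_mul]
    have hcs : (∑ k, ‖b k‖) ≤ Real.sqrt r * Real.sqrt (tnsq V) := by
      have h1 : (∑ k, ‖b k‖) ^ 2 ≤ (r : ℝ) * ∑ k, ‖b k‖ ^ 2 := by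
        simpa using sq_sum_le_card_mul_sum_sq (s := Finset.univ) (f := fun k => ‖b k‖)
      have h2 : (∑ k, ‖b k‖) ≤ Real.sqrt ((r : ℝ) * ∑ k, ‖b k‖ ^ 2) := by
        rw [← Real.sqrt_sq (by positivity : (0:ℝ) ≤ ∑ k, ‖b k‖)]
        exact Real.sqrt_le_sqrt h1
      rwa [Real.sqrt_mul (by positivity), ← htV] at h2
    have hkey : Real.sqrt r * (2 * (ε / (24 * Real.sqrt r))) ≤ ε / 12 := by
      rcases Nat.eq_zero_or_pos r with hr | hr
      · subst hr
        simp only [Nat.cast_zero, Real.sqrt_zero, zero_mul]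
        positivity
      · have hsr : (0:ℝ) < Real.sqrt r := Real.sqrt_pos.2 (by exact_mod_cast hr)
        have heq : Real.sqrt r * (2 * (ε / (24 * Real.sqrt r))) = ε / 12 := by
          field_simp
          ring
        linarith
    calc ‖ttip (L₀ W) (L₀ V)‖
        = c * ‖ttip (L₀ u) (L₀ V)‖ := by
          rw [hW', norm_mul, hnc]
      _ ≤ c * ((∑ k, ‖b k‖) * (2 * (ε / (24 * Real.sqrt r)))) :=
          mul_le_mul_of_nonneg_left habs hc0.le
      _ ≤ c * ((Real.sqrt r * Real.sqrt (tnsq V)) * (2 * (ε / (24 * Real.sqrt r)))) := by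
          refine mul_le_mul_of_nonneg_left (mul_le_mul_of_nonneg_right hcs (by positivity)) hc0.le
      _ = c * Real.sqrt (tnsq V) * (Real.sqrt r * (2 * (ε / (24 * Real.sqrt r)))) := by ring
      _ ≤ c * Real.sqrt (tnsq V) * (ε / 12) :=
          mul_le_mul_of_nonneg_left hkey (by positivity)
      _ = ε / 12 * (c * Real.sqrt (tnsq V)) := by ring
  obtain ⟨e5, he5, hWJL⟩ := hJL1 W (Set.mem_union_right _ rfl)
  obtain ⟨e6, he6, hVJL⟩ := hJL1 V (Set.mem_union_left _ hVspan)
  have hdiff : tnsq (L₀ (X - Y)) - tnsq (X - Y)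
      = e5 * tnsq W + e6 * tnsq V + 2 * (ttip (L₀ W) (L₀ V)).re := by
    have h : L₀ (X - Y) = L₀ W + L₀ V := by rw [hsplit, map_add]
    rw [h, tnsq_add, hWJL, hVJL, hS]
    ring
  rw [hdiff, hS]
  have hAM : c * Real.sqrt (tnsq V) ≤ (tnsq W + tnsq V) / 2 := by
    nlinarith [sq_nonneg (c - Real.sqrt (tnsq V))]
  have h5 : |e5| ≤ ε / 6 := le_of_lt (abs_lt.2 ⟨he5.1, he5.2⟩)
  have h6 : |e6| ≤ ε / 6 := le_of_lt (abs_lt.2 ⟨he6.1, he6.2⟩)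
  have hreW : |2 * (ttip (L₀ W) (L₀ V)).re| ≤ ε / 6 * (c * Real.sqrt (tnsq V)) := by
    rw [abs_mul, abs_two]
    have := (Complex.abs_re_le_norm (ttip (L₀ W) (L₀ V))).trans hcross
    linarith
  have hb5 : |e5 * tnsq W| ≤ ε / 6 * tnsq W := by
    rw [abs_mul, abs_of_nonneg hWpos.le]
    exact mul_le_mul_of_nonneg_right h5 hWpos.le
  have hb6 : |e6 * tnsq V| ≤ ε / 6 * tnsq V := by
    rw [abs_mul, abs_of_nonneg htVnn]
    exact mul_le_mul_of_nonneg_right h6 htVnn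
  have habs3 := abs_add_three (e5 * tnsq W) (e6 * tnsq V) (2 * (ttip (L₀ W) (L₀ V)).re)
  have hmul : ε / 6 * (c * Real.sqrt (tnsq V)) ≤ ε / 6 * ((tnsq W + tnsq V) / 2) :=
    mul_le_mul_of_nonneg_left hAM (by positivity)
  nlinarith [hWpos.le, htVnn]
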